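/- For any (r_0,r_1,…,r_{q−1}) ∈ ℤ^q and t ∈ ℤ, one has #Ω_{(r_0,r_1,…,r_{q−1}),t} = #Ω_{(r_0−1,r_1,…,r_{q−1}),t} + 1 if and only if Σ_{μ=1}^{q−1} ⌈(r_0 − r_μ)/(m(q+1))⌉ + q(q−1)·⌈r_0/m⌉ ≤ (t + q³·r_0)/(m(q+1)), equivalently m(q+1)·(Σ_{μ=1}^{q−1} ⌈(r_0 − r_μ)/(m(q+1))⌉ + q(q−1)·⌈r_0/m⌉) ≤ t + q³·r_0. -/

import Mathlib

/-- The lattice point set `Ω_{r,s,t}` associated with the GGS curve: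
triples `(i, j, k)` with `i + r 0 ≥ 0`, `0 ≤ i + m(q+1) j_μ + r_μ < m(q+1)` for
`μ = 1, …, q-1`, `0 ≤ i + m k_ν + s_ν < m` for `ν = 1, …, q²-1`, and
`q³ i + m(q+1)|j| + m q |k| ≤ t`. -/
def OmegaSet (q : ℕ) (hq : 0 < q) (m : ℤ) (r : Fin q → ℤ) (s : Fin (q ^ 2 - 1) → ℤ)
    (t : ℤ) : Set (ℤ × (Fin (q - 1) → ℤ) × (Fin (q ^ 2 - 1) → ℤ)) :=
  {p | 0 ≤ p.1 + r ⟨0, hq⟩ ∧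
    (∀ μ : Fin (q - 1),
      0 ≤ p.1 + m * ((q : ℤ) + 1) * p.2.1 μ + r ⟨μ.val + 1, by have := μ.isLt; omega⟩ ∧
      p.1 + m * ((q : ℤ) + 1) * p.2.1 μ + r ⟨μ.val + 1, by have := μ.isLt; omega⟩
        < m * ((q : ℤ) + 1)) ∧
    (∀ ν : Fin (q ^ 2 - 1), 0 ≤ p.1 + m * p.2.2 ν + s ν ∧ p.1 + m * p.2.2 ν + s ν < m) ∧
    (q : ℤ) ^ 3 * p.1 + m * ((q : ℤ) + 1) * (∑ μ, p.2.1 μ)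
      + m * (q : ℤ) * (∑ ν, p.2.2 ν) ≤ t}


/-- `#Ω_{(r₀,…,r_(q-1)),t} = #Ω_{(r₀-1,r₁,…,r_(q-1)),t} + 1` iff
`m(q+1)·(Σ_μ ⌈(r₀ - r_μ)/(m(q+1))⌉ + q(q-1)⌈r₀/m⌉) ≤ t + q³ r₀`. -/
lemma omega_finite (q : ℕ) (hq : 0 < q) (m : ℤ) (hm : 0 < m)
    (r : Fin q → ℤ) (t : ℤ) :
    (OmegaSet q hq m r (fun _ => 0) t).Finite := by
  have hq' : (1:ℤ) ≤ (q:ℤ) := by exact_mod_cast hq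
  set M : ℤ := m * ((q : ℤ) + 1) with hM
  have hM0 : 0 < M := mul_pos hm (by linarith)
  set S : ℤ := ∑ μ : Fin (q-1), r ⟨μ.val + 1, by have := μ.isLt; omega⟩ with hS
  set f : ℤ × (Fin (q-1) → ℤ) × (Fin (q^2-1) → ℤ) → ℤ × (Fin (q-1) → ℤ) × (Fin (q^2-1) → ℤ) :=
    fun p => (p.1, fun μ => M * p.2.1 μ, fun ν => m * p.2.2 ν) with hf
  have hinj : Function.Injective f := by
    rintro ⟨a, b, c⟩ ⟨a', b', c'⟩ h
    simp only [hf, Prod.mk.injEq] at h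
    obtain ⟨h1, h2, h3⟩ := h
    refine Prod.ext h1 (Prod.ext (funext fun μ => ?_) (funext fun ν => ?_))
    · exact mul_left_cancel₀ hM0.ne' (congrFun h2 μ)
    · exact mul_left_cancel₀ hm.ne' (congrFun h3 ν)
  have hcard1 : ((Finset.univ : Finset (Fin (q-1))).card : ℤ) = (q:ℤ) - 1 := by
    simp; push_cast [Nat.cast_sub hq]; ring
  have hcard2 : ((Finset.univ : Finset (Fin (q^2-1))).card : ℤ) = (q:ℤ)^2 - 1 := by
    have : 1 ≤ q^2 := Nat.one_le_pow _ _ hq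
    simp; push_cast [Nat.cast_sub this]; ring
  have hbox : (Set.Icc (-(r ⟨0, hq⟩)) (t + S) ×ˢ
      ((Set.univ.pi fun μ : Fin (q-1) => Set.Icc (-(t+S) - r ⟨μ.val+1, by have := μ.isLt; omega⟩)
          (M + r ⟨0, hq⟩ - r ⟨μ.val+1, by have := μ.isLt; omega⟩)) ×ˢ
       (Set.univ.pi fun _ : Fin (q^2-1) => Set.Icc (-(t+S)) (m + r ⟨0, hq⟩)))).Finite :=
    (Set.finite_Icc _ _).prod
      ((Set.Finite.pi fun _ => Set.finite_Icc _ _).prod (Set.Finite.pi fun _ => Set.finite_Icc _ _))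
  refine Set.Finite.subset (hbox.preimage hinj.injOn) ?_
  intro p hp
  obtain ⟨h1, h2, h3, h4⟩ := hp
  rw [← hM] at h2 h4
  simp only [add_zero] at h3
  have hq0 : (0:ℤ) ≤ (q:ℤ) := by positivity
  have hjs : (1 - (q:ℤ)) * p.1 - S ≤ M * (∑ μ, p.2.1 μ) := by
    have heq : ∑ μ : Fin (q-1), (-p.1 - r ⟨μ.val+1, by have := μ.isLt; omega⟩)
        = ((q:ℤ)-1) * (-p.1) - S := by
      simp only [Finset.sum_sub_distrib, Finset.sum_const, nsmul_eq_mul, hcard1, hS]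
    rw [Finset.mul_sum]
    calc (1 - (q:ℤ)) * p.1 - S = ((q:ℤ)-1) * (-p.1) - S := by ring
    _ = _ := heq.symm
    _ ≤ ∑ μ, M * p.2.1 μ := Finset.sum_le_sum fun μ _ => by have := (h2 μ).1; linarith
  have hks : (1 - (q:ℤ)^2) * p.1 ≤ m * (∑ ν, p.2.2 ν) := by
    have heq : ∑ _ν : Fin (q^2-1), (-p.1) = ((q:ℤ)^2-1) * (-p.1) := by
      rw [Finset.sum_const, nsmul_eq_mul, hcard2]
    rw [Finset.mul_sum]
    calc (1 - (q:ℤ)^2) * p.1 = ((q:ℤ)^2-1) * (-p.1) := by ring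
    _ = _ := heq.symm
    _ ≤ ∑ ν, m * p.2.2 ν := Finset.sum_le_sum fun ν _ => by have := (h3 ν).1; linarith
  have h5 : (q:ℤ) * ((1 - (q:ℤ)^2) * p.1) ≤ (q:ℤ) * (m * ∑ ν, p.2.2 ν) :=
    mul_le_mul_of_nonneg_left hks hq0
  have hi : p.1 ≤ t + S := by nlinarith [h4, hjs, h5]
  simp only [Set.mem_preimage, hf, Set.mem_prod, Set.mem_pi, Set.mem_univ, forall_true_left,
    Set.mem_Icc]
  refine ⟨⟨by linarith, hi⟩, fun μ => ⟨?_, ?_⟩, fun ν => ⟨?_, ?_⟩⟩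
  · have := (h2 μ).1; linarith
  · have := (h2 μ).2; linarith
  · have := (h3 ν).1; linarith
  · have := (h3 ν).2; linarith

lemma ceil_char (a b j : ℤ) (hb : 0 < b) :
    ⌈(a:ℚ)/(b:ℚ)⌉ = j ↔ 0 ≤ b * j - a ∧ b * j - a < b := by
  have hb' : (0:ℚ) < (b:ℚ) := by exact_mod_cast hb
  rw [Int.ceil_eq_iff, div_le_iff₀ hb', lt_div_iff₀ hb']
  constructor
  · rintro ⟨h1, h2⟩
    have h1' : (j - 1) * b < a := by exact_mod_cast h1
    have h2' : a ≤ j * b := by exact_mod_cast h2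
    constructor <;> nlinarith
  · rintro ⟨h1, h2⟩
    qify at h1 h2
    constructor <;> nlinarith

theorem card_OmegaSet_sub_one_r (q n : ℕ) (hq : IsPrimePow q) (hn : Odd n) (hn1 : 1 < n)
    (m : ℤ) (hm : m * ((q : ℤ) + 1) = (q : ℤ) ^ n + 1)
    (r : Fin q → ℤ) (t : ℤ) :
    (OmegaSet q hq.pos m r (fun _ => 0) t).ncard
        = (OmegaSet q hq.pos m
            (Function.update r ⟨0, hq.pos⟩ (r ⟨0, hq.pos⟩ - 1)) (fun _ => 0) t).ncard + 1 ↔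
      m * ((q : ℤ) + 1) *
          ((∑ μ : Fin (q - 1),
              ⌈((r ⟨0, hq.pos⟩ - r ⟨μ.val + 1, by have := μ.isLt; omega⟩ : ℤ) : ℚ)
                / ((m * ((q : ℤ) + 1) : ℤ) : ℚ)⌉)
            + (q : ℤ) * ((q : ℤ) - 1) * ⌈((r ⟨0, hq.pos⟩ : ℤ) : ℚ) / ((m : ℤ) : ℚ)⌉)
        ≤ t + (q : ℤ) ^ 3 * r ⟨0, hq.pos⟩ := by
  have hq1 : 0 < q := hq.pos
  have hqZ : (1:ℤ) ≤ (q:ℤ) := by exact_mod_cast hq1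
  have hM0 : 0 < m * ((q:ℤ)+1) := by
    rw [hm]; positivity
  have hm0 : 0 < m := by nlinarith
  set r0 := r ⟨0, hq.pos⟩ with hr0
  set M : ℤ := m * ((q:ℤ)+1) with hM
  set r' := Function.update r ⟨0, hq.pos⟩ (r0 - 1) with hr'def
  have hr'0 : r' ⟨0, hq.pos⟩ = r0 - 1 := Function.update_self _ _ _
  have hr'μ : ∀ μ : Fin (q-1), r' ⟨μ.val + 1, by have := μ.isLt; omega⟩
      = r ⟨μ.val + 1, by have := μ.isLt; omega⟩ := by
    intro μ
    apply Function.update_of_ne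
    simp [Fin.ext_iff]
  set A := OmegaSet q hq.pos m r (fun _ => 0) t with hA
  set B := OmegaSet q hq.pos m r' (fun _ => 0) t with hB
  set jstar : Fin (q-1) → ℤ := fun μ =>
    ⌈((r0 - r ⟨μ.val + 1, by have := μ.isLt; omega⟩ : ℤ) : ℚ) / ((M : ℤ) : ℚ)⌉ with hjstar
  set kstar : ℤ := ⌈((r0 : ℤ) : ℚ) / ((m : ℤ) : ℚ)⌉ with hkstar
  set pstar : ℤ × (Fin (q-1) → ℤ) × (Fin (q^2-1) → ℤ) := (-r0, jstar, fun _ => kstar)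
    with hpstar
  set Sl := A ∩ {p | p.1 = -r0} with hSl
  have hcard2 : ((Finset.univ : Finset (Fin (q^2-1))).card : ℤ) = (q:ℤ)^2 - 1 := by
    have : 1 ≤ q^2 := Nat.one_le_pow _ _ hq1
    simp; push_cast [Nat.cast_sub this]; ring
  -- decomposition
  have hAeq : A = B ∪ Sl := by
    ext p
    simp only [hA, hB, hSl, OmegaSet, Set.mem_setOf_eq, Set.mem_union, Set.mem_inter_iff,
      hr'0, hr'μ, ← hr0, ← hM]
    constructor
    · rintro ⟨h1, hC⟩
      by_cases hp : p.1 = -r0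
      · exact Or.inr ⟨⟨h1, hC⟩, hp⟩
      · exact Or.inl ⟨by omega, hC⟩
    · rintro (⟨h1, hC⟩ | ⟨⟨h1, hC⟩, hp⟩)
      · exact ⟨by omega, hC⟩
      · exact ⟨h1, hC⟩
  have hdisj : Disjoint B Sl := by
    rw [Set.disjoint_left]
    rintro p hpB ⟨hpA, hp1⟩
    have h1 := hpB.1
    rw [hr'0] at h1
    simp only [Set.mem_setOf_eq] at hp1
    omega
  have hsub : Sl ⊆ {pstar} := by
    rintro p ⟨hpA, hp1⟩
    simp only [Set.mem_setOf_eq] at hp1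
    obtain ⟨h1, h2, h3, h4⟩ := hpA
    rw [← hM] at h2
    simp only [add_zero] at h3
    rw [hp1] at h2 h3
    simp only [Set.mem_singleton_iff, hpstar]
    refine Prod.ext hp1 (Prod.ext (funext fun μ => ?_) (funext fun ν => ?_))
    · exact ((ceil_char _ _ _ hM0).2 ⟨by linarith [(h2 μ).1], by linarith [(h2 μ).2]⟩).symm
    · exact ((ceil_char _ _ _ hm0).2 ⟨by linarith [(h3 ν).1], by linarith [(h3 ν).2]⟩).symm
  have hsum : (∑ _ν : Fin (q^2-1), kstar) = ((q:ℤ)^2 - 1) * kstar := by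
    rw [Finset.sum_const, nsmul_eq_mul, hcard2]
  have hmem : pstar ∈ A ↔
      M * ((∑ μ, jstar μ) + (q:ℤ) * ((q:ℤ) - 1) * kstar) ≤ t + (q:ℤ)^3 * r0 := by
    simp only [hA, OmegaSet, Set.mem_setOf_eq, hpstar, ← hM, ← hr0]
    have hj : ∀ μ : Fin (q-1), 0 ≤ M * jstar μ - (r0 - r ⟨μ.val + 1, by have := μ.isLt; omega⟩)
        ∧ M * jstar μ - (r0 - r ⟨μ.val + 1, by have := μ.isLt; omega⟩) < M :=
      fun μ => (ceil_char _ _ _ hM0).1 rfl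
    have hk : 0 ≤ m * kstar - r0 ∧ m * kstar - r0 < m := (ceil_char _ _ _ hm0).1 rfl
    have hiff : ∀ X : Prop, (True ∧ True ∧ True ∧ X) ↔ X := by tauto
    have e1 : (0 : ℤ) ≤ -r0 + r0 := by omega
    have key : ((q:ℤ)^3 * (-r0) + M * (∑ μ, jstar μ) + m * (q:ℤ) * ((q:ℤ)^2 - 1) * kstar
        = M * ((∑ μ, jstar μ) + (q:ℤ) * ((q:ℤ) - 1) * kstar) - (q:ℤ)^3 * r0) := by
      rw [hM]; ring
    constructor
    · rintro ⟨-, -, -, h4⟩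
      rw [hsum] at h4
      linarith [h4, key]
    · intro h
      refine ⟨e1, fun μ => ⟨by linarith [(hj μ).1], by linarith [(hj μ).2]⟩,
        fun ν => ⟨by linarith [hk.1], by linarith [hk.2]⟩, ?_⟩
      rw [hsum]
      linarith [key]
  have hfinA : A.Finite := omega_finite q hq.pos m hm0 r t
  have hfinB : B.Finite := omega_finite q hq.pos m hm0 r' t
  have hfinS : Sl.Finite := hfinA.inter_of_left _
  have hcardA : A.ncard = B.ncard + Sl.ncard := by
    rw [hAeq, Set.ncard_union_eq hdisj hfinB hfinS]
  have hS01 : Sl.ncard ≤ 1 := by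
    calc Sl.ncard ≤ ({pstar} : Set _).ncard :=
          Set.ncard_le_ncard hsub (Set.finite_singleton _)
    _ = 1 := Set.ncard_singleton _
  have hS1 : Sl.ncard = 1 ↔ pstar ∈ A := by
    constructor
    · intro h
      obtain ⟨p, hp⟩ := Set.nonempty_of_ncard_ne_zero (s := Sl) (by omega)
      have hps := hsub hp
      rw [Set.mem_singleton_iff] at hps
      rw [hps] at hp
      exact hp.1
    · intro h
      have hpm : pstar ∈ Sl := ⟨h, rfl⟩
      rw [Set.Subset.antisymm hsub (Set.singleton_subset_iff.2 hpm), Set.ncard_singleton]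
  rw [hcardA]
  rw [show (t + (q:ℤ)^3 * r ⟨0, hq.pos⟩) = t + (q:ℤ)^3 * r0 from rfl]
  constructor
  · intro h
    exact hmem.1 (hS1.1 (by omega))
  · intro h
    have := hS1.2 (hmem.2 h)
    omega
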